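/- Let X, Y be coinfinite primitive recursive sets with R_Y ≤_pr R_X. Then either the pair (Y,X) satisfies the ♦-property, or R_Y ≤_pr R_{X^{[-1]}}, where X^{[-1]} is obtained from X by removing the least element of the complement of X from the complement (adding it to X). -/

import Mathlib

/-- The equivalence relation `R_X`: `x R_X y` iff both in `X` or `x = y`. -/
def REq (X : Set ℕ) (x y : ℕ) : Prop := (x ∈ X ∧ y ∈ X) ∨ x = y

/-- Primitive recursive reducibility between binary relations on ℕ. -/
def PrRed (R S : ℕ → ℕ → Prop) : Prop :=
  ∃ f : ℕ → ℕ, Primrec f ∧ ∀ x y, R x y ↔ S (f x) (f y)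

/-- pr-bireducibility. -/
def PrEquiv (R S : ℕ → ℕ → Prop) : Prop := PrRed R S ∧ PrRed S R

/-- `X` is a primitive recursive set. -/
def PRSet (X : Set ℕ) : Prop :=
  ∃ f : ℕ → Bool, Primrec f ∧ ∀ n, n ∈ X ↔ f n = true

/-- `#(0^X)[s]`: the number of elements of the complement of `X` that are `≤ s`. -/
noncomputable def zc (X : Set ℕ) (s : ℕ) : ℕ := {k | k ≤ s ∧ k ∉ X}.ncard

/-- The ♦-property for a pair of sets. -/
def DiamondProp (X Y : Set ℕ) : Prop :=
  ∃ X' Y' : Set ℕ, PRSet X' ∧ PRSet Y' ∧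
    PrEquiv (REq X') (REq X) ∧ PrEquiv (REq Y') (REq Y) ∧
    ∀ s, ∃ t, s ≤ t ∧ zc X' t = zc Y' t

/-- `X^{[-1]}`: add the least element of the complement of `X` into `X`. -/
noncomputable def remOne (X : Set ℕ) : Set ℕ := insert (sInf Xᶜ) X

private def pcount (p : ℕ → Bool) : ℕ → ℕ
  | 0 => cond (p 0) 1 0
  | n+1 => pcount p n + cond (p (n+1)) 1 0

private lemma pcount_mono (p : ℕ → Bool) : Monotone (pcount p) :=
  monotone_nat_of_le_succ fun n => Nat.le_add_right _ _

private lemma pcount_succ_le (p : ℕ → Bool) (n : ℕ) : pcount p (n+1) ≤ pcount p n + 1 := by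
  cases h : p (n+1) <;> simp [pcount, h]

private lemma pcount_pos (p : ℕ → Bool) (n : ℕ) (h : p n = true) : 1 ≤ pcount p n := by
  cases n with
  | zero => simp [pcount, h]
  | succ k => simp [pcount, h]

private lemma pcount_strict (p : ℕ → Bool) {x y : ℕ} (hxy : x < y) (h : p y = true) :
    pcount p x < pcount p y := by
  obtain ⟨k, rfl⟩ : ∃ k, y = k + 1 := ⟨y - 1, by omega⟩
  have h1 : pcount p x ≤ pcount p k := pcount_mono p (by omega)
  have : pcount p (k+1) = pcount p k + 1 := by simp [pcount, h]
  omega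

private lemma primrec_pcount {α : Type} [Primcodable α] {p : α → ℕ → Bool}
    (hp : Primrec₂ p) : Primrec₂ fun a n => pcount (p a) n := by
  have H : Primrec₂ fun a (n : ℕ) =>
      Nat.rec (motive := fun _ => ℕ) (cond (p a 0) 1 0)
        (fun k ih => ih + cond (p a (k+1)) 1 0) n :=
    Primrec.nat_rec
      (Primrec.cond (hp.comp Primrec.id (Primrec.const 0)) (Primrec.const 1) (Primrec.const 0))
      (Primrec.nat_add.comp (Primrec.snd.comp Primrec.snd)
        (Primrec.cond
          (hp.comp Primrec.fst (Primrec.succ.comp (Primrec.fst.comp Primrec.snd)))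
          (Primrec.const 1) (Primrec.const 0))).to₂
  refine H.of_eq fun a n => ?_
  induction n with
  | zero => rfl
  | succ k ih => simp only [pcount, ← ih]

private lemma pcount_lt_const (b N : ℕ) : pcount (fun t => decide (t < b)) N = min b (N+1) := by
  induction N with
  | zero => cases b <;> simp [pcount]
  | succ N ih =>
    by_cases h : N + 1 < b <;> simp [pcount, ih, h] <;> omega

open Classical in
private lemma zc_eq_card (X : Set ℕ) (s : ℕ) :
    zc X s = ((Finset.range (s+1)).filter (fun k => k ∉ X)).card := by
  rw [zc, ← Set.ncard_coe_finset]
  congr 1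
  ext k
  simp [Nat.lt_succ_iff]

open Classical in
private lemma zc_zero (X : Set ℕ) : zc X 0 = if 0 ∈ X then 0 else 1 := by
  rw [zc_eq_card]
  simp [Finset.range_one, Finset.filter_singleton]
  split <;> simp_all

open Classical in
private lemma zc_succ (X : Set ℕ) (s : ℕ) :
    zc X (s+1) = zc X s + if (s+1) ∈ X then 0 else 1 := by
  rw [zc_eq_card, zc_eq_card, Finset.range_add_one, Finset.filter_insert]
  split
  next h => rw [Finset.card_insert_of_notMem (by simp)]
  next h => simp at h; simp [h]

private lemma zc_mono (X : Set ℕ) : Monotone (zc X) :=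
  monotone_nat_of_le_succ fun n => by rw [zc_succ]; omega

private lemma zc_succ_le (X : Set ℕ) (s : ℕ) : zc X (s+1) ≤ zc X s + 1 := by
  rw [zc_succ]; split <;> omega

private lemma zc_eq_pcount {X : Set ℕ} {χ : ℕ → Bool} (hχ : ∀ n, n ∈ X ↔ χ n = true) :
    ∀ s, zc X s = pcount (fun k => !χ k) s := by
  intro s
  induction s with
  | zero =>
    rw [zc_zero, pcount]
    by_cases h : 0 ∈ X
    · simp [h, (hχ 0).mp h]
    · have : χ 0 = false := by simpa [hχ 0] using h
      simp [h, this]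
  | succ k ih =>
    rw [zc_succ, pcount, ih]
    by_cases h : (k+1) ∈ X
    · simp [h, (hχ (k+1)).mp h]
    · have : χ (k+1) = false := by simpa [hχ (k+1)] using h
      simp [h, this]
private lemma tri (u v : ℕ → ℕ) (hu : ∀ t, u (t+1) ≤ u t + 1) (hum : Monotone u)
    (hv : ∀ t, v (t+1) ≤ v t + 1) (hvm : Monotone v) :
    (∀ s, ∃ t, s ≤ t ∧ u t = v t) ∨ (∃ s, ∀ t, s ≤ t → u t < v t) ∨
      (∃ s, ∀ t, s ≤ t → v t < u t) := by
  by_cases h : ∀ s, ∃ t, s ≤ t ∧ u t = v t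
  · exact Or.inl h
  push_neg at h
  obtain ⟨s₀, hs₀⟩ := h
  rcases lt_or_gt_of_ne (hs₀ s₀ le_rfl) with hlt | hgt
  · refine Or.inr (Or.inl ⟨s₀, fun t ht => ?_⟩)
    induction t, ht using Nat.le_induction with
    | base => exact hlt
    | succ t ht ih =>
      have h1 : u (t+1) ≤ v (t+1) :=
        le_trans (hu t) (le_trans (Nat.succ_le_of_lt ih) (hvm (Nat.le_succ t)))
      exact lt_of_le_of_ne h1 (hs₀ (t+1) (by omega))
  · refine Or.inr (Or.inr ⟨s₀, fun t ht => ?_⟩)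
    induction t, ht using Nat.le_induction with
    | base => exact hgt
    | succ t ht ih =>
      have h1 : v (t+1) ≤ u (t+1) :=
        le_trans (hv t) (le_trans (Nat.succ_le_of_lt ih) (hum (Nat.le_succ t)))
      exact lt_of_le_of_ne h1 fun e => hs₀ (t+1) (by omega) e.symm

private lemma prRed_refl (R : ℕ → ℕ → Prop) : PrRed R R :=
  ⟨id, Primrec.id, fun _ _ => Iff.rfl⟩

private lemma prEquiv_refl (R : ℕ → ℕ → Prop) : PrEquiv R R :=
  ⟨prRed_refl R, prRed_refl R⟩

/-- searching for the point where a monotone count reaches `v`. -/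
private lemma bfind_spec (χ : ℕ → Bool) (v N : ℕ) (hv : 1 ≤ v)
    (hN : v ≤ pcount (fun k => !χ k) N) :
    pcount (fun k => !χ k) (pcount (fun t => decide (pcount (fun k => !χ k) t < v)) N) = v ∧
      χ (pcount (fun t => decide (pcount (fun k => !χ k) t < v)) N) = false := by
  set cB := pcount (fun k => !χ k) with hcB
  have hmono : Monotone cB := pcount_mono _
  have hex : ∃ b, v ≤ cB b := ⟨N, hN⟩
  obtain ⟨b0, hb0, hmin, hb0N⟩ :
      ∃ b0, v ≤ cB b0 ∧ (∀ t, t < b0 → cB t < v) ∧ b0 ≤ N :=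
    ⟨Nat.find hex, Nat.find_spec hex,
      fun t ht => lt_of_not_ge (Nat.find_min hex ht), Nat.find_min' hex hN⟩
  have hpred : (fun t => decide (cB t < v)) = fun t => decide (t < b0) := by
    funext t
    apply decide_eq_decide.mpr
    constructor
    · intro h
      by_contra hb
      push_neg at hb
      exact absurd (le_trans hb0 (hmono hb)) (not_le.mpr h)
    · exact hmin t
  have hg : pcount (fun t => decide (cB t < v)) N = b0 := by
    rw [hpred, pcount_lt_const]; omega
  rw [hg]
  cases b0 with
  | zero =>
    cases hχ0 : χ 0 with
    | false =>
      have h0 : cB 0 = 1 := by simp [hcB, pcount, hχ0]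
      exact ⟨by omega, rfl⟩
    | true =>
      have h0 : cB 0 = 0 := by simp [hcB, pcount, hχ0]
      omega
  | succ k =>
    have hk : cB k < v := hmin k (Nat.lt_succ_self k)
    cases hχk : χ (k+1) with
    | false =>
      have h1 : cB (k+1) = cB k + 1 := by simp [hcB, pcount, hχk]
      exact ⟨by omega, rfl⟩
    | true =>
      have h1 : cB (k+1) = cB k := by simp [hcB, pcount, hχk]
      omega

/-- The general reduction construction. -/
private lemma gen_red (A B : Set ℕ) (hA : PRSet A) (hB : PRSet B) (c : ℕ) (hc : c ∈ B)
    (s₀ : ℕ) (hcnt : ∀ n, zc A n ≤ zc B (max n s₀)) :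
    PrRed (REq A) (REq B) := by
  obtain ⟨χA, hχA, hmemA⟩ := hA
  obtain ⟨χB, hχB, hmemB⟩ := hB
  have hzcA : ∀ s, zc A s = pcount (fun k => !χA k) s := zc_eq_pcount hmemA
  have hzcB : ∀ s, zc B s = pcount (fun k => !χB k) s := zc_eq_pcount hmemB
  set cA : ℕ → ℕ := pcount (fun k => !χA k) with hcAdef
  set cB : ℕ → ℕ := pcount (fun k => !χB k) with hcBdef
  set g : ℕ → ℕ := fun n => pcount (fun t => decide (cB t < cA n)) (max n s₀) with hgdef
  set f : ℕ → ℕ := fun n => cond (χA n) c (g n) with hfdef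
  -- spec for non-elements
  have hspec : ∀ n, n ∉ A → cB (g n) = cA n ∧ χB (g n) = false := by
    intro n hn
    have hχn : χA n = false := by simpa [hmemA n] using hn
    have hv : 1 ≤ cA n := pcount_pos _ n (by simp [hχn])
    have hN : cA n ≤ cB (max n s₀) := by
      rw [← hzcA, ← hzcB]; exact hcnt n
    exact bfind_spec χB (cA n) (max n s₀) hv hN
  have hfmem : ∀ n, n ∉ A → f n = g n ∧ f n ∉ B := by
    intro n hn
    have hχn : χA n = false := by simpa [hmemA n] using hn
    have h1 : f n = g n := by simp [hfdef, hχn]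
    refine ⟨h1, ?_⟩
    rw [h1]
    have := (hspec n hn).2
    simp [hmemB, this]
  have hfc : ∀ n, n ∈ A → f n = c := by
    intro n hn
    have hχn : χA n = true := (hmemA n).mp hn
    simp [hfdef, hχn]
  have hinj : ∀ x y, x ∉ A → y ∉ A → x ≠ y → f x ≠ f y := by
    have key : ∀ x y, x ∉ A → y ∉ A → x < y → f x ≠ f y := by
      intro x y hx hy hxy
      have hχy : χA y = false := by simpa [hmemA y] using hy
      have hlt : cA x < cA y := pcount_strict _ hxy (by simp [hχy])
      intro he
      have e1 : cB (f x) = cA x := by rw [(hfmem x hx).1]; exact (hspec x hx).1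
      have e2 : cB (f y) = cA y := by rw [(hfmem y hy).1]; exact (hspec y hy).1
      rw [he, e2] at e1
      omega
    intro x y hx hy hxy
    rcases lt_or_gt_of_ne hxy with h | h
    · exact key x y hx hy h
    · exact fun e => key y x hy hx h e.symm
  -- primitive recursiveness
  have hcA_pr : Primrec cA := by
    have h1 : Primrec fun k => !χA k := (Primrec.dom_bool not).comp hχA
    exact (primrec_pcount (h1.comp Primrec.snd).to₂ (α := ℕ)).comp Primrec.id Primrec.id
      |>.of_eq fun n => rfl
  have hcB_pr : Primrec cB := by
    have h1 : Primrec fun k => !χB k := (Primrec.dom_bool not).comp hχB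
    exact ((primrec_pcount (α := ℕ) (h1.comp Primrec.snd).to₂).comp Primrec.id
      Primrec.id).of_eq fun n => rfl
  have hp : Primrec₂ fun n t => decide (cB t < cA n) :=
    (Primrec.nat_lt.comp₂ (hcB_pr.comp Primrec.snd).to₂ (hcA_pr.comp Primrec.fst).to₂).decide
  have hg_pr : Primrec g :=
    ((primrec_pcount hp).comp Primrec.id
      (Primrec.nat_max.comp Primrec.id (Primrec.const s₀))).of_eq fun n => rfl
  have hf_pr : Primrec f := Primrec.cond hχA (Primrec.const c) hg_pr
  refine ⟨f, hf_pr, fun x y => ?_⟩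
  by_cases hx : x ∈ A <;> by_cases hy : y ∈ A
  · refine iff_of_true (Or.inl ⟨hx, hy⟩) ?_
    rw [hfc x hx, hfc y hy]
    exact Or.inr rfl
  · refine iff_of_false ?_ ?_
    · rintro (⟨_, h⟩ | rfl)
      · exact hy h
      · exact hy hx
    · rw [hfc x hx]
      rintro (⟨_, hb⟩ | he)
      · exact (hfmem y hy).2 hb
      · exact (hfmem y hy).2 (he ▸ hc)
  · refine iff_of_false ?_ ?_
    · rintro (⟨h, _⟩ | rfl)
      · exact hx h
      · exact hx hy
    · rw [hfc y hy]
      rintro (⟨hb, _⟩ | he)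
      · exact (hfmem x hx).2 hb
      · exact (hfmem x hx).2 (he ▸ hc)
  · constructor
    · rintro (⟨hxa, _⟩ | rfl)
      · exact absurd hxa hx
      · exact Or.inr rfl
    · rintro (⟨hb, _⟩ | he)
      · exact absurd hb (hfmem x hx).2
      · refine Or.inr ?_
        by_contra hne
        exact hinj x y hx hy hne he

/-- Reduction to `REq` of the empty set. -/
private lemma red_to_empty (A : Set ℕ) (hA : PRSet A) : PrRed (REq A) (REq (∅ : Set ℕ)) := by
  obtain ⟨χ, hχ, hmem⟩ := hA
  refine ⟨fun n => cond (χ n) 0 (2*n+2), ?_, ?_⟩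
  · exact Primrec.cond hχ (Primrec.const 0)
      (Primrec.succ.comp (Primrec.succ.comp (Primrec.nat_mul.comp (Primrec.const 2) Primrec.id)))
  · intro x y
    have hREq : ∀ a b : ℕ, REq (∅ : Set ℕ) a b ↔ a = b := by
      intro a b
      simp [REq]
    rw [hREq]
    by_cases hx : x ∈ A <;> by_cases hy : y ∈ A
    · have h1 : χ x = true := (hmem x).mp hx
      have h2 : χ y = true := (hmem y).mp hy
      simp [h1, h2, REq, hx, hy]
    · have h1 : χ x = true := (hmem x).mp hx
      have h2 : χ y = false := by simpa [hmem y] using hy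
      simp only [h1, h2, cond_true, cond_false]
      constructor
      · rintro (⟨_, h⟩ | rfl)
        · exact absurd h hy
        · exact absurd hx hy
      · omega
    · have h1 : χ x = false := by simpa [hmem x] using hx
      have h2 : χ y = true := (hmem y).mp hy
      simp only [h1, h2, cond_true, cond_false]
      constructor
      · rintro (⟨h, _⟩ | rfl)
        · exact absurd h hx
        · exact absurd hy hx
      · omega
    · have h1 : χ x = false := by simpa [hmem x] using hx
      have h2 : χ y = false := by simpa [hmem y] using hy
      simp only [h1, h2, cond_false]
      constructor
      · rintro (⟨h, _⟩ | rfl)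
        · exact absurd h hx
        · rfl
      · intro h
        exact Or.inr (by omega)

private lemma PRSet_insert (m : ℕ) (X : Set ℕ) (hX : PRSet X) : PRSet (insert m X) := by
  obtain ⟨χ, hχ, hmem⟩ := hX
  refine ⟨fun n => if n = m then true else χ n, ?_, ?_⟩
  · exact Primrec.ite (Primrec.eq.comp Primrec.id (Primrec.const m))
      (Primrec.const true) hχ
  · intro n
    by_cases h : n = m <;> simp [h, hmem n]

open Classical in
private lemma zc_insert (m : ℕ) (X : Set ℕ) (hm : m ∉ X) (t : ℕ) (hmt : m ≤ t) :
    zc (insert m X) t + 1 = zc X t := by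
  rw [zc_eq_card, zc_eq_card]
  have key : (Finset.range (t+1)).filter (fun k => k ∉ X) =
      insert m ((Finset.range (t+1)).filter (fun k => k ∉ insert m X)) := by
    ext k
    simp only [Finset.mem_insert, Finset.mem_filter, Finset.mem_range, Nat.lt_succ_iff,
      Set.mem_insert_iff]
    constructor
    · rintro ⟨hk, hkX⟩
      by_cases he : k = m
      · exact Or.inl he
      · exact Or.inr ⟨hk, fun h => h.elim he hkX⟩
    · rintro (rfl | ⟨hk, hkX⟩)
      · exact ⟨hmt, hm⟩
      · exact ⟨hk, fun h => hkX (Or.inr h)⟩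
  rw [key, Finset.card_insert_of_notMem (by simp)]
  congr 1
  exact congrArg Finset.card (Finset.filter_congr_decidable _ _ _)

theorem stmt_19 (X Y : Set ℕ) (hX : PRSet X) (hY : PRSet Y)
    (hXc : Xᶜ.Infinite) (hYc : Yᶜ.Infinite)
    (hred : PrRed (REq Y) (REq X)) :
    DiamondProp Y X ∨ PrRed (REq Y) (REq (remOne X)) := by
  classical
  rcases tri (zc X) (zc Y) (zc_succ_le X) (zc_mono X) (zc_succ_le Y) (zc_mono Y)
    with h1 | h2 | h3
  · left
    exact ⟨Y, X, hY, hX, prEquiv_refl _, prEquiv_refl _,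
      fun s => (h1 s).imp fun t ⟨ht, he⟩ => ⟨ht, he.symm⟩⟩
  · -- eventually `zc X < zc Y`; then `REq X ≤ REq Y`, and the pair is trivially synchronized
    obtain ⟨s₀, hs₀⟩ := h2
    left
    refine ⟨X, X, hX, hX, ⟨?_, hred⟩, prEquiv_refl _, fun s => ⟨s, le_rfl, rfl⟩⟩
    rcases Set.eq_empty_or_nonempty Y with rfl | ⟨c, hc⟩
    · exact red_to_empty X hX
    · refine gen_red X Y hX hY c hc s₀ fun n => ?_
      have e1 := zc_mono X (le_max_left n s₀)
      have e2 := hs₀ (max n s₀) (le_max_right n s₀)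
      omega
  · -- eventually `zc Y < zc X`; then `REq Y ≤ REq (remOne X)`
    obtain ⟨s₀, hs₀⟩ := h3
    right
    have hm : sInf Xᶜ ∉ X := Nat.sInf_mem hXc.nonempty
    set m := sInf Xᶜ with hmdef
    refine gen_red Y (remOne X) hY (PRSet_insert m X hX) m (Set.mem_insert _ _)
      (max s₀ m) fun n => ?_
    have e1 := zc_mono Y (le_max_left n (max s₀ m))
    have e2 := hs₀ (max n (max s₀ m))
      (le_trans (le_max_left s₀ m) (le_max_right n (max s₀ m)))
    have e3 := zc_insert m X hm (max n (max s₀ m))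
      (le_trans (le_max_right s₀ m) (le_max_right n (max s₀ m)))
    simp only [remOne, ← hmdef]
    omega
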